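/- For each positive integer k, the fractional multipacking number of G_k (3k pentagons A_i = (a_i, b_i, c_i, d_i, e_i, a_i) joined by edges b_i e_{i+1}) is at least 4k; in particular, the weight function w assigning 1/3 to each of b_i, c_i, d_i, e_i for all i (and 0 to each a_i) is a fractional multipacking of total weight 4k. -/

import Mathlib

open SimpleGraph

variable {V : Type*}

/-- `p` restricted to `{0,…,k}` is an isometric path of length `k` in `G`. -/
def IsIsomPath (G : SimpleGraph V) (p : ℕ → V) (k : ℕ) : Prop :=
  ∀ i j, i ≤ k → j ≤ k → G.dist (p i) (p j) = max i j - min i j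

def pathVerts (p : ℕ → V) (k : ℕ) : Set V := {x | ∃ i, i ≤ k ∧ p i = x}

noncomputable def ecc (G : SimpleGraph V) [Fintype V] (v : V) : ℕ :=
  Finset.univ.sup (fun u => G.dist v u)

noncomputable def grad (G : SimpleGraph V) [Fintype V] : ℕ :=
  sInf (Set.range (ecc G))

noncomputable def gdiam (G : SimpleGraph V) [Fintype V] : ℕ :=
  Finset.univ.sup (fun v => ecc G v)

def IsMultipacking (G : SimpleGraph V) [Fintype V] (M : Set V) : Prop :=
  ∀ v : V, ∀ r : ℕ, 1 ≤ r → r ≤ gdiam G →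
    (M ∩ {u | G.dist v u ≤ r}).ncard ≤ r

noncomputable def mp (G : SimpleGraph V) [Fintype V] : ℕ :=
  sSup {n | ∃ M : Set V, IsMultipacking G M ∧ M.ncard = n}

def IsDomBroadcast (G : SimpleGraph V) [Fintype V] (f : V → ℕ) : Prop :=
  (∀ v, f v ≤ gdiam G) ∧ ∀ u : V, ∃ v : V, 1 ≤ f v ∧ G.dist u v ≤ f v

noncomputable def gammaB (G : SimpleGraph V) [Fintype V] : ℕ :=
  sInf {n | ∃ f : V → ℕ, IsDomBroadcast G f ∧ ∑ v, f v = n}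

noncomputable def gammaDom (G : SimpleGraph V) [Fintype V] : ℕ :=
  sInf {n | ∃ D : Finset V, (∀ u : V, ∃ v ∈ D, u = v ∨ G.Adj u v) ∧ D.card = n}

def IsFracMP (G : SimpleGraph V) [Fintype V] (w : V → ℝ) : Prop :=
  (∀ v, 0 ≤ w v) ∧ ∀ v : V, ∀ r : ℕ, 1 ≤ r →
    (∑ u ∈ Finset.univ.filter (fun u => G.dist v u ≤ r), w u) ≤ r

noncomputable def mpf (G : SimpleGraph V) [Fintype V] : ℝ :=
  sSup {s | ∃ w : V → ℝ, IsFracMP G w ∧ ∑ v, w v = s}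

/-- A cactus: connected and every edge lies on at most one cycle. -/
def IsCactus (G : SimpleGraph V) : Prop :=
  G.Connected ∧ ∀ (u v : V) (c₁ : G.Walk u u) (c₂ : G.Walk v v),
    c₁.IsCycle → c₂.IsCycle → ∀ e, e ∈ c₁.edges → e ∈ c₂.edges →
      (∀ e', e' ∈ c₁.edges ↔ e' ∈ c₂.edges)

def pentRel (k : ℕ) (x y : Fin (3*k) × Fin 5) : Prop :=
  (x.1 = y.1 ∧ (x.2.val + 1) % 5 = y.2.val) ∨
  (x.1.val + 1 = y.1.val ∧ x.2.val = 1 ∧ y.2.val = 4)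

def Gk (k : ℕ) : SimpleGraph (Fin (3*k) × Fin 5) := SimpleGraph.fromRel (pentRel k)

set_option maxHeartbeats 1000000


def cd (a b : ℕ) : ℕ := min ((a - b) + (b - a)) (5 - ((a - b) + (b - a)))

def Dd (i j i' j' : ℕ) : ℕ :=
  if i = i' then cd j j'
  else if i < i' then cd j 1 + 1 + 3*(i' - i - 1) + cd 4 j'
  else cd j 4 + 1 + 3*(i - i' - 1) + cd 1 j'

lemma Dd_self (i j : ℕ) : Dd i j i j = 0 := by unfold Dd cd; split_ifs <;> omega

lemma Dd_step {a b a' b' I J : ℕ} (hb : b < 5) (hb' : b' < 5) (hJ : J < 5)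
    (h : (a = a' ∧ (b+1) % 5 = b') ∨ (a + 1 = a' ∧ b = 1 ∧ b' = 4)) :
    Dd a' b' I J ≤ Dd a b I J + 1 ∧ Dd a b I J ≤ Dd a' b' I J + 1 := by
  unfold Dd cd
  rcases h with ⟨rfl, h⟩ | ⟨rfl, rfl, rfl⟩ <;>
    [skip; skip] <;> constructor <;> split_ifs <;> omega

lemma Dd_window {i jv a b a' b' r : ℕ} (hj : jv < 5) (hb : b < 5) (hb' : b' < 5)
    (hb0 : b ≠ 0) (hb'0 : b' ≠ 0) (hr : 1 ≤ r) (hne : ¬(jv = 0 ∧ r = 1))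
    (h1 : Dd i jv a b ≤ r) (h2 : Dd i jv a' b' ≤ r) :
    4*a + 4 - b ≤ (4*a' + 4 - b') + (3*r - 1) := by
  unfold Dd cd at h1 h2
  interval_cases jv <;> split_ifs at h1 h2 <;> omega

lemma Dd_center {i a b : ℕ} (hb : b < 5) (hb0 : b ≠ 0) (h : Dd i 0 a b ≤ 1) :
    a = i ∧ (b = 1 ∨ b = 4) := by
  unfold Dd cd at h; split_ifs at h <;> omega



lemma Dd_le_walk {k : ℕ} : ∀ {u v : Fin (3*k) × Fin 5} (p : (Gk k).Walk u v),
    Dd u.1.val u.2.val v.1.val v.2.val ≤ p.length := by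
  intro u v p
  induction p with
  | nil => simp [Dd_self]
  | @cons x y z h q ih =>
    have hy2 := y.2.isLt
    have hx2 := x.2.isLt
    have hz2 := z.2.isLt
    rw [Gk, SimpleGraph.fromRel_adj] at h
    rcases h.2 with hp | hp <;> unfold pentRel at hp
    · have hn : (x.1.val = y.1.val ∧ (x.2.val + 1) % 5 = y.2.val) ∨
          (x.1.val + 1 = y.1.val ∧ x.2.val = 1 ∧ y.2.val = 4) := by
        rcases hp with ⟨h1, h2⟩ | h'
        · exact Or.inl ⟨by rw [h1], h2⟩
        · exact Or.inr h'
      have key := Dd_step (a := x.1.val) (b := x.2.val) (a' := y.1.val) (b' := y.2.val)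
        (I := z.1.val) (J := z.2.val) hx2 hy2 hz2
        (by rcases hn with ⟨h1, h2⟩ | h' ; exact Or.inl ⟨h1, h2⟩; exact Or.inr h')
      calc Dd x.1.val x.2.val z.1.val z.2.val ≤ Dd y.1.val y.2.val z.1.val z.2.val + 1 := key.2
        _ ≤ q.length + 1 := by omega
        _ = (SimpleGraph.Walk.cons ‹(Gk k).Adj x y› q).length := by
            rfl
    · have hn : (y.1.val = x.1.val ∧ (y.2.val + 1) % 5 = x.2.val) ∨
          (y.1.val + 1 = x.1.val ∧ y.2.val = 1 ∧ x.2.val = 4) := by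
        rcases hp with ⟨h1, h2⟩ | h'
        · exact Or.inl ⟨by rw [h1], h2⟩
        · exact Or.inr h'
      have key := Dd_step (a := y.1.val) (b := y.2.val) (a' := x.1.val) (b' := x.2.val)
        (I := z.1.val) (J := z.2.val) hy2 hx2 hz2 hn
      calc Dd x.1.val x.2.val z.1.val z.2.val ≤ Dd y.1.val y.2.val z.1.val z.2.val + 1 := key.1
        _ ≤ q.length + 1 := by omega
        _ = (SimpleGraph.Walk.cons ‹(Gk k).Adj x y› q).length := by
            rfl

lemma adj_succ' {k : ℕ} (i : Fin (3*k)) (j j' : Fin 5) (h : (j.val + 1) % 5 = j'.val) :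
    (Gk k).Adj (i, j) (i, j') := by
  rw [Gk, SimpleGraph.fromRel_adj]
  constructor
  · intro hc
    have : j = j' := (Prod.ext_iff.mp hc).2
    subst this
    have := j.isLt
    omega
  · exact Or.inl (Or.inl ⟨rfl, h⟩)

lemma adj_cross' {k : ℕ} (i i' : Fin (3*k)) (h : i.val + 1 = i'.val) :
    (Gk k).Adj (i, (1 : Fin 5)) (i', (4 : Fin 5)) := by
  rw [Gk, SimpleGraph.fromRel_adj]
  constructor
  · intro hc
    have : i = i' := (Prod.ext_iff.mp hc).1
    subst this; omega
  · exact Or.inl (Or.inr ⟨h, rfl, rfl⟩)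

lemma reach_pent' {k : ℕ} (i : Fin (3*k)) (j j' : Fin 5) : (Gk k).Reachable (i, j) (i, j') := by
  have hs : ∀ j : Fin 5, (Gk k).Reachable (i, 0) (i, j) := by
    intro j
    have r1 : (Gk k).Reachable (i, 0) (i, 1) := (adj_succ' i 0 1 (by decide)).reachable
    have r2 : (Gk k).Reachable (i, 1) (i, 2) := (adj_succ' i 1 2 (by decide)).reachable
    have r3 : (Gk k).Reachable (i, 2) (i, 3) := (adj_succ' i 2 3 (by decide)).reachable
    have r4 : (Gk k).Reachable (i, 3) (i, 4) := (adj_succ' i 3 4 (by decide)).reachable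
    fin_cases j
    · exact SimpleGraph.Reachable.refl _
    · exact r1
    · exact r1.trans r2
    · exact (r1.trans r2).trans r3
    · exact ((r1.trans r2).trans r3).trans r4
  exact (hs j).symm.trans (hs j')

lemma reach_zero' {k : ℕ} (hk : 1 ≤ k) : ∀ (n : ℕ) (hn : n < 3*k) (j : Fin 5),
    (Gk k).Reachable ((⟨0, by omega⟩ : Fin (3*k)), 0) (⟨n, hn⟩, j) := by
  intro n
  induction n with
  | zero => intro hn j; exact reach_pent' _ _ _
  | succ m ih =>
    intro hn j
    have hm : m < 3*k := by omega
    have r1 := ih hm 1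
    have r2 : (Gk k).Reachable ((⟨m, hm⟩ : Fin (3*k)), (1 : Fin 5)) (⟨m+1, hn⟩, (4 : Fin 5)) :=
      (adj_cross' ⟨m, hm⟩ ⟨m+1, hn⟩ rfl).reachable
    exact (r1.trans r2).trans (reach_pent' _ _ _)

lemma reach_all' {k : ℕ} (hk : 1 ≤ k) (u v : Fin (3*k) × Fin 5) : (Gk k).Reachable u v := by
  have h1 := reach_zero' hk u.1.val u.1.isLt u.2
  have h2 := reach_zero' hk v.1.val v.1.isLt v.2
  exact (h1.symm.trans h2)

lemma Dd_le_dist {k : ℕ} (hk : 1 ≤ k) (u v : Fin (3*k) × Fin 5) :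
    Dd u.1.val u.2.val v.1.val v.2.val ≤ (Gk k).dist u v := by
  obtain ⟨p, hp⟩ := (reach_all' hk u v).exists_walk_length_eq_dist
  rw [← hp]
  exact Dd_le_walk p

lemma dist_le_card {k : ℕ} (hk : 1 ≤ k) (u v : Fin (3*k) × Fin 5) :
    (Gk k).dist u v ≤ 15*k := by
  obtain ⟨p, hp, hl⟩ := (reach_all' hk u v).exists_path_of_dist
  have := hp.length_lt
  have hcard : Fintype.card (Fin (3*k) × Fin 5) = 15*k := by
    simp [Fintype.card_prod]; ring
  omega



lemma card_ball {k : ℕ} (v : Fin (3*k) × Fin 5) (r : ℕ) (hr : 1 ≤ r) :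
    ((Finset.univ : Finset (Fin (3*k) × Fin 5)).filter
      (fun u => Dd v.1.val v.2.val u.1.val u.2.val ≤ r ∧ u.2.val ≠ 0)).card ≤ 3*r := by
  set T := (Finset.univ : Finset (Fin (3*k) × Fin 5)).filter
      (fun u => Dd v.1.val v.2.val u.1.val u.2.val ≤ r ∧ u.2.val ≠ 0) with hT
  by_cases hc : v.2.val = 0 ∧ r = 1
  · have hsub : T ⊆ {(v.1, (1 : Fin 5)), (v.1, (4 : Fin 5))} := by
      intro u hu
      rw [hT, Finset.mem_filter] at hu
      obtain ⟨hD, hu0⟩ := hu.2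
      rw [hc.1, hc.2] at hD
      obtain ⟨ha, hb⟩ := Dd_center u.2.isLt hu0 hD
      have h1 : u.1 = v.1 := Fin.ext ha
      simp only [Finset.mem_insert, Finset.mem_singleton]
      rcases hb with hb | hb
      · left; rw [← h1]; exact Prod.ext rfl (Fin.ext (by simpa using hb))
      · right; rw [← h1]; exact Prod.ext rfl (Fin.ext (by simpa using hb))
    calc T.card ≤ _ := Finset.card_le_card hsub
      _ ≤ 2 := by
          exact le_trans (Finset.card_insert_le _ _) (by simp)
      _ ≤ 3*r := by omega
  · have hinj : Set.InjOn (fun u : Fin (3*k) × Fin 5 => 4*u.1.val + 4 - u.2.val) T := by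
      intro u hu u' hu' he
      have hu2 := Finset.mem_filter.mp (Finset.mem_coe.mp hu)
      have hu2' := Finset.mem_filter.mp (Finset.mem_coe.mp hu')
      have h2 := u.2.isLt; have h2' := u'.2.isLt
      have h0 := hu2.2.2; have h0' := hu2'.2.2
      simp only at he
      have : u.1.val = u'.1.val ∧ u.2.val = u'.2.val := by omega
      exact Prod.ext (Fin.ext this.1) (Fin.ext this.2)
    rw [← Finset.card_image_of_injOn hinj]
    set L := T.image (fun u : Fin (3*k) × Fin 5 => 4*u.1.val + 4 - u.2.val) with hL
    rcases L.eq_empty_or_nonempty with he | hne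
    · rw [he]; simp
    · set m := L.min' hne with hm
      have hsub : L ⊆ Finset.Icc m (m + (3*r - 1)) := by
        intro x hx
        rw [Finset.mem_Icc]
        refine ⟨Finset.min'_le _ _ hx, ?_⟩
        obtain ⟨u, hu, hux⟩ := Finset.mem_image.mp hx
        obtain ⟨um, hum, humm⟩ := Finset.mem_image.mp (L.min'_mem hne)
        rw [hT, Finset.mem_filter] at hu hum
        rw [← hux, hm, ← humm]
        exact Dd_window v.2.isLt u.2.isLt um.2.isLt hu.2.2 hum.2.2 hr hc hu.2.1 hum.2.1
      calc L.card ≤ _ := Finset.card_le_card hsub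
        _ ≤ 3*r := by rw [Nat.card_Icc]; omega

theorem Gk_fractional_multipacking (k : ℕ) (hk : 1 ≤ k) :
    IsFracMP (Gk k) (fun x => if x.2.val = 0 then (0 : ℝ) else 1 / 3) ∧
    (∑ x : Fin (3*k) × Fin 5,
      (if x.2.val = 0 then (0 : ℝ) else 1 / 3)) = 4 * k ∧
    (4 * k : ℝ) ≤ mpf (Gk k) := by
  have hfmp : IsFracMP (Gk k) (fun x => if x.2.val = 0 then (0 : ℝ) else 1 / 3) := by
    constructor
    · intro v; dsimp only; split_ifs <;> norm_num
    · intro v r hr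
      have hsum : (∑ u ∈ Finset.univ.filter (fun u : Fin (3*k) × Fin 5 => (Gk k).dist v u ≤ r),
          (if u.2.val = 0 then (0 : ℝ) else 1 / 3)) =
          (((Finset.univ.filter (fun u : Fin (3*k) × Fin 5 => (Gk k).dist v u ≤ r)).filter
            (fun u => u.2.val ≠ 0)).card : ℝ) * (1/3) := by
        rw [Finset.sum_congr rfl (g := fun u => if ¬ (u.2.val = 0) then (1/3 : ℝ) else 0)
          (fun u _ => by split_ifs <;> simp_all), ← Finset.sum_filter, Finset.sum_const]
        simp [mul_comm]
      rw [hsum]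
      have hsubset : (Finset.univ.filter (fun u : Fin (3*k) × Fin 5 => (Gk k).dist v u ≤ r)).filter
            (fun u => u.2.val ≠ 0) ⊆
          Finset.univ.filter (fun u => Dd v.1.val v.2.val u.1.val u.2.val ≤ r ∧ u.2.val ≠ 0) := by
        intro u hu
        simp only [Finset.mem_filter, Finset.mem_univ, true_and] at hu ⊢
        exact ⟨le_trans (Dd_le_dist hk v u) hu.1, hu.2⟩
      have hcard := le_trans (Finset.card_le_card hsubset) (card_ball v r hr)
      calc ((Finset.filter _ _).card : ℝ) * (1/3) ≤ (3*r : ℕ) * (1/3) := by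
            apply mul_le_mul_of_nonneg_right _ (by norm_num)
            exact_mod_cast hcard
        _ = r := by push_cast; ring
  have hsum4 : (∑ x : Fin (3*k) × Fin 5,
      (if x.2.val = 0 then (0 : ℝ) else 1 / 3)) = 4 * k := by
    rw [Fintype.sum_prod_type]
    have hinner : ∀ i : Fin (3*k), (∑ j : Fin 5, if (j : ℕ) = 0 then (0:ℝ) else 1/3) = 4/3 := by
      intro i
      rw [Fin.sum_univ_five]
      norm_num [show ((0:Fin 5):ℕ) = 0 from rfl, show ((1:Fin 5):ℕ) = 1 from rfl,
        show ((2:Fin 5):ℕ) = 2 from rfl, show ((3:Fin 5):ℕ) = 3 from rfl,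
        show ((4:Fin 5):ℕ) = 4 from rfl]
    rw [Finset.sum_congr rfl (fun i _ => hinner i), Finset.sum_const]
    simp only [Finset.card_univ, Fintype.card_fin, nsmul_eq_mul]
    push_cast; ring
  refine ⟨hfmp, hsum4, ?_⟩
  have hmem : (4 * (k:ℝ)) ∈ {s | ∃ w : Fin (3*k) × Fin 5 → ℝ, IsFracMP (Gk k) w ∧ ∑ v, w v = s} :=
    ⟨_, hfmp, hsum4⟩
  have hbdd : BddAbove {s | ∃ w : Fin (3*k) × Fin 5 → ℝ, IsFracMP (Gk k) w ∧ ∑ v, w v = s} := by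
    refine ⟨(15*k : ℕ), ?_⟩
    rintro s ⟨w, hw, rfl⟩
    set v0 : Fin (3*k) × Fin 5 := (⟨0, by omega⟩, 0) with hv0
    have h15 : (1:ℕ) ≤ 15*k := by omega
    have hb := hw.2 v0 (15*k) h15
    have hfilter : Finset.univ.filter (fun u : Fin (3*k) × Fin 5 => (Gk k).dist v0 u ≤ 15*k)
        = Finset.univ := Finset.filter_true_of_mem (fun u _ => dist_le_card hk v0 u)
    rw [hfilter] at hb
    exact hb
  exact le_csSup hbdd hmem
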